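/- Let K ⊆ ℝ be a subfield that is a finite extension of ℚ of degree d. If f ∈ ℚ[x₁,…,xₙ] satisfies f = p₁² + p₂² for some p₁, p₂ ∈ K[x₁,…,xₙ], then there exist P₁, P₂ ∈ ℚ[x₁,…,xₙ] such that f^d = P₁² + P₂². -/

import Mathlib

set_option maxHeartbeats 1000000
set_option linter.unusedSectionVars false

open MvPolynomial

section Aux

variable {τ : Type*} {L M : Type*} [Field L] [Field M] [Algebra L M]
variable {κ : Type*} [Fintype κ] [DecidableEq κ] (b : Module.Basis κ L M)

noncomputable def auxPhi (q : MvPolynomial τ M) (i : κ) : MvPolynomial τ L :=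
  q.support.sum fun m => monomial m (b.repr (q.coeff m) i)

lemma coeff_auxPhi (q : MvPolynomial τ M) (i : κ) (m : τ →₀ ℕ) :
    (auxPhi b q i).coeff m = b.repr (q.coeff m) i := by
  classical
  simp only [auxPhi, MvPolynomial.coeff_sum, MvPolynomial.coeff_monomial]
  rw [Finset.sum_ite_eq' q.support m (fun v => b.repr (q.coeff v) i)]
  by_cases h : m ∈ q.support
  · simp [h]
  · simp only [h, if_false]
    rw [MvPolynomial.notMem_support_iff.mp h]
    simp

lemma auxPhi_add (q q' : MvPolynomial τ M) (i : κ) :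
    auxPhi b (q + q') i = auxPhi b q i + auxPhi b q' i := by
  ext m
  simp [coeff_auxPhi, MvPolynomial.coeff_add]

lemma auxPhi_map_mul (p : MvPolynomial τ L) (q : MvPolynomial τ M) (i : κ) :
    auxPhi b (MvPolynomial.map (algebraMap L M) p * q) i = p * auxPhi b q i := by
  classical
  ext m
  rw [coeff_auxPhi, MvPolynomial.coeff_mul, MvPolynomial.coeff_mul]
  simp only [map_sum, Finsupp.coe_finset_sum, Finset.sum_apply]
  refine Finset.sum_congr rfl fun x _ => ?_
  rw [MvPolynomial.coeff_map, coeff_auxPhi, ← Algebra.smul_def, map_smul]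
  rfl

lemma auxPhi_sum (q : MvPolynomial τ M) :
    (∑ i, MvPolynomial.map (algebraMap L M) (auxPhi b q i) * MvPolynomial.C (b i)) = q := by
  ext m
  rw [MvPolynomial.coeff_sum]
  have : ∀ i, ((MvPolynomial.map (algebraMap L M) (auxPhi b q i)) * MvPolynomial.C (b i)).coeff m
      = b.repr (q.coeff m) i • b i := by
    intro i
    rw [mul_comm, MvPolynomial.coeff_C_mul, MvPolynomial.coeff_map, coeff_auxPhi,
      Algebra.smul_def, mul_comm]
  simp_rw [this]
  exact b.sum_repr _

lemma auxPhi_psi (c : κ → MvPolynomial τ L) (i : κ) :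
    auxPhi b (∑ j, MvPolynomial.map (algebraMap L M) (c j) * MvPolynomial.C (b j)) i = c i := by
  classical
  ext m
  rw [coeff_auxPhi, MvPolynomial.coeff_sum]
  have : ∀ j, ((MvPolynomial.map (algebraMap L M) (c j)) * MvPolynomial.C (b j)).coeff m
      = ((c j).coeff m) • b j := by
    intro j
    rw [mul_comm, MvPolynomial.coeff_C_mul, MvPolynomial.coeff_map, Algebra.smul_def, mul_comm]
  simp_rw [this, map_sum, map_smul]
  simp [Module.Basis.repr_self, Finsupp.single_apply]

variable [Algebra (MvPolynomial τ L) (MvPolynomial τ M)]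
variable (halg : ∀ p, algebraMap (MvPolynomial τ L) (MvPolynomial τ M) p
    = MvPolynomial.map (algebraMap L M) p)

noncomputable def auxEquiv :
    MvPolynomial τ M ≃ₗ[MvPolynomial τ L] (κ → MvPolynomial τ L) where
  toFun q i := auxPhi b q i
  map_add' q q' := funext fun i => auxPhi_add b q q' i
  map_smul' r q := funext fun i => by
    simp only [RingHom.id_apply, Pi.smul_apply, smul_eq_mul]
    rw [Algebra.smul_def, halg, auxPhi_map_mul]
  invFun c := ∑ j, MvPolynomial.map (algebraMap L M) (c j) * MvPolynomial.C (b j)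
  left_inv q := auxPhi_sum b q
  right_inv c := funext fun i => auxPhi_psi b c i

noncomputable def auxBasis : Module.Basis κ (MvPolynomial τ L) (MvPolynomial τ M) :=
  Module.Basis.ofEquivFun (auxEquiv b halg)

lemma auxBasis_repr (q : MvPolynomial τ M) (i : κ) :
    (auxBasis b halg).repr q i = auxPhi b q i :=
  Module.Basis.ofEquivFun_repr_apply _ _ _

lemma auxBasis_apply (j : κ) : auxBasis b halg j = MvPolynomial.C (b j) := by
  classical
  rw [auxBasis, Module.Basis.coe_ofEquivFun]
  show (auxEquiv b halg).symm (Function.update 0 j 1) = _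
  show (∑ k, MvPolynomial.map (algebraMap L M) (Function.update (0 : κ → MvPolynomial τ L) j 1 k)
      * MvPolynomial.C (b k)) = _
  rw [Finset.sum_eq_single j]
  · simp
  · intro k _ hk
    simp [Function.update_of_ne hk]
  · simp


lemma aux_repr_semilinear (γ : L →+* L) (σ : M →+* M)
    (hcomm : ∀ x : L, σ (algebraMap L M x) = algebraMap L M (γ x))
    (hfix : ∀ j, σ (b j) = b j) (x : M) (i : κ) :
    b.repr (σ x) i = γ (b.repr x i) := by
  classical
  conv_lhs => rw [← b.sum_repr x, map_sum]
  have h1 : ∀ j, σ (b.repr x j • b j) = γ (b.repr x j) • b j := by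
    intro j
    rw [Algebra.smul_def, map_mul, hcomm, hfix, ← Algebra.smul_def]
  simp_rw [h1]
  simp only [map_sum, map_smul, Finsupp.coe_finset_sum, Finset.sum_apply, Finsupp.smul_apply,
    Module.Basis.repr_self, Finsupp.single_apply, smul_eq_mul, mul_ite, mul_one, mul_zero]
  rw [Finset.sum_ite_eq' Finset.univ i (fun j => γ (b.repr x j))]
  simp

lemma aux_auxPhi_map (γ : L →+* L) (σ : M →+* M)
    (hcomm : ∀ x : L, σ (algebraMap L M x) = algebraMap L M (γ x))
    (hfix : ∀ j, σ (b j) = b j) (q : MvPolynomial τ M) (i : κ) :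
    auxPhi b (MvPolynomial.map σ q) i = MvPolynomial.map γ (auxPhi b q i) := by
  ext m
  rw [coeff_auxPhi, MvPolynomial.coeff_map, MvPolynomial.coeff_map, coeff_auxPhi,
    aux_repr_semilinear b γ σ hcomm hfix]

include halg in
lemma aux_norm_map (γ : L →+* L) (σ : M →+* M)
    (hcomm : ∀ x : L, σ (algebraMap L M x) = algebraMap L M (γ x))
    (hfix : ∀ j, σ (b j) = b j) (q : MvPolynomial τ M) :
    Algebra.norm (MvPolynomial τ L) (MvPolynomial.map σ q)
      = MvPolynomial.map γ (Algebra.norm (MvPolynomial τ L) q) := by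
  classical
  rw [Algebra.norm_eq_matrix_det (auxBasis b halg), Algebra.norm_eq_matrix_det (auxBasis b halg),
    RingHom.map_det]
  congr 1
  ext i j
  rw [RingHom.mapMatrix_apply, Matrix.map_apply, Algebra.leftMulMatrix_eq_repr_mul,
    Algebra.leftMulMatrix_eq_repr_mul, auxBasis_apply, auxBasis_repr, auxBasis_repr]
  have : MvPolynomial.map σ q * MvPolynomial.C (b j)
      = MvPolynomial.map σ (q * MvPolynomial.C (b j)) := by
    rw [map_mul, MvPolynomial.map_C, hfix]
  rw [this, aux_auxPhi_map b γ σ hcomm hfix]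

end Aux
lemma aux_irreducible_X_sq_add_one {F : Type*} [Field F] (h : ∀ x : F, x ^ 2 ≠ -1) :
    Irreducible (Polynomial.X ^ 2 + 1 : Polynomial F) := by
  have h2 : (Polynomial.X ^ 2 + 1 : Polynomial F) = Polynomial.X ^ 2 - Polynomial.C (-1) := by
    rw [map_neg, map_one, sub_neg_eq_add]
  rw [h2]
  exact X_pow_sub_C_irreducible_of_prime Nat.prime_two h

lemma aux_exists_preimage {τ F L' : Type*} [CommSemiring F] [CommSemiring L'] (f : F →+* L')
    (Q : MvPolynomial τ L') (h : ∀ m, ∃ a, f a = Q.coeff m) :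
    ∃ P : MvPolynomial τ F, MvPolynomial.map f P = Q := by
  classical
  refine ⟨∑ m ∈ Q.support, MvPolynomial.monomial m (h m).choose, ?_⟩
  rw [map_sum]
  conv_rhs => rw [Q.as_sum]
  refine Finset.sum_congr rfl fun m _ => ?_
  rw [MvPolynomial.map_monomial, (h m).choose_spec]

lemma aux_decomp {F : Type*} [Field F] (x : AdjoinRoot (Polynomial.X ^ 2 + 1 : Polynomial F)) :
    ∃ a b : F, x = algebraMap F _ a + algebraMap F _ b * AdjoinRoot.root _ := by
  obtain ⟨p, rfl⟩ := AdjoinRoot.mk_surjective x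
  set q : Polynomial F := Polynomial.X ^ 2 + 1 with hq
  have h1 : q = Polynomial.X ^ 2 + Polynomial.C 1 := by rw [map_one]
  have hmonic : q.Monic := by rw [h1]; exact Polynomial.monic_X_pow_add_C 1 (by norm_num)
  have key : AdjoinRoot.mk q p = AdjoinRoot.mk q (p %ₘ q) := by
    conv_lhs => rw [← Polynomial.modByMonic_add_div p q]
    rw [map_add, map_mul, AdjoinRoot.mk_self, zero_mul, add_zero]
  have hdeg : (p %ₘ q).degree ≤ 1 := by
    have h2 : q.degree = 2 := by rw [h1]; exact Polynomial.degree_X_pow_add_C (by norm_num) 1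
    have h3 := Polynomial.degree_modByMonic_lt p hmonic
    rw [h2] at h3
    exact Order.le_of_lt_succ (by exact_mod_cast h3)
  refine ⟨(p %ₘ q).coeff 0, (p %ₘ q).coeff 1, ?_⟩
  rw [key]
  conv_lhs => rw [Polynomial.eq_X_add_C_of_degree_le_one hdeg]
  rw [map_add, map_mul, AdjoinRoot.mk_C, AdjoinRoot.mk_C, AdjoinRoot.mk_X,
    AdjoinRoot.algebraMap_eq]
  ring

noncomputable abbrev auxq (F : Type*) [Field F] : Polynomial F := Polynomial.X ^ 2 + 1

noncomputable abbrev auxAR (F : Type*) [Field F] := AdjoinRoot (auxq F)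

noncomputable def auxr (F : Type*) [Field F] : auxAR F := AdjoinRoot.root (auxq F)

lemma auxr_sq (F : Type*) [Field F] : auxr F ^ 2 = -1 := by
  unfold auxr
  have h0 : (AdjoinRoot.mk (auxq F)) (Polynomial.X ^ 2 + 1) = 0 := AdjoinRoot.mk_self
  rw [map_add, map_pow, map_one, AdjoinRoot.mk_X] at h0
  linear_combination h0

lemma aux_aeval_neg_root (F : Type*) [Field F] :
    (Polynomial.aeval (-(auxr F))) (auxq F) = 0 := by
  show (Polynomial.aeval (-(auxr F))) (Polynomial.X ^ 2 + 1) = 0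
  rw [map_add, map_pow, Polynomial.aeval_X, map_one, neg_sq, auxr_sq, neg_add_cancel]

noncomputable def auxσ (F : Type*) [Field F] : auxAR F →ₐ[F] auxAR F :=
  AdjoinRoot.liftAlgHom (auxq F) (Algebra.ofId F (auxAR F)) (-(auxr F)) (aux_aeval_neg_root F)

lemma auxσ_root (F : Type*) [Field F] : auxσ F (auxr F) = -(auxr F) := by
  unfold auxσ auxr
  exact AdjoinRoot.liftAlgHom_root _ _ _ (aux_aeval_neg_root F)

lemma aux_aeval_rootK (K : Type*) [Field K] [Algebra ℚ K] :
    (Polynomial.aeval (auxr K)) (auxq ℚ) = 0 := by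
  show (Polynomial.aeval (auxr K)) (Polynomial.X ^ 2 + 1) = 0
  rw [map_add, map_pow, Polynomial.aeval_X, map_one, auxr_sq, neg_add_cancel]

noncomputable def auxι (K : Type*) [Field K] [Algebra ℚ K] : auxAR ℚ →ₐ[ℚ] auxAR K :=
  AdjoinRoot.liftAlgHom (auxq ℚ) (Algebra.ofId ℚ (auxAR K)) (auxr K) (aux_aeval_rootK K)

lemma auxι_root (K : Type*) [Field K] [Algebra ℚ K] : auxι K (auxr ℚ) = auxr K := by
  unfold auxι auxr
  exact AdjoinRoot.liftAlgHom_root _ _ _ (aux_aeval_rootK K)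

lemma auxσ_invol (F : Type*) [Field F] (x : auxAR F) : auxσ F (auxσ F x) = x := by
  have h : (auxσ F).comp (auxσ F) = AlgHom.id F (auxAR F) := by
    apply AdjoinRoot.algHom_ext
    simp only [AlgHom.comp_apply, AlgHom.id_apply]
    rw [show AdjoinRoot.root (auxq F) = auxr F from rfl, auxσ_root, map_neg, auxσ_root, neg_neg]
  exact DFunLike.congr_fun h x

lemma aux_comm (K : Type*) [Field K] [Algebra ℚ K] (x : auxAR ℚ) :
    auxσ K (auxι K x) = auxι K (auxσ ℚ x) := by
  have h : ((auxσ K).restrictScalars ℚ).comp (auxι K) = (auxι K).comp (auxσ ℚ) := by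
    apply AdjoinRoot.algHom_ext
    simp only [AlgHom.comp_apply, AlgHom.coe_restrictScalars]
    rw [show AdjoinRoot.root (auxq ℚ) = auxr ℚ from rfl, auxι_root, auxσ_root,
      show (AlgHom.restrictScalars ℚ (auxσ K)) (auxr K) = auxσ K (auxr K) from rfl, auxσ_root,
      map_neg, auxι_root]
  exact DFunLike.congr_fun h x

set_option maxHeartbeats 1600000 in
theorem aux_main {K : Type*} [Field K] [Algebra ℚ K] [FiniteDimensional ℚ K]
    (hsq : ∀ x : K, x ^ 2 ≠ -1) (n d : ℕ) (hd : Module.finrank ℚ K = d)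
    (f : MvPolynomial (Fin n) ℚ) (p₁ p₂ : MvPolynomial (Fin n) K)
    (hf : MvPolynomial.map (algebraMap ℚ K) f = p₁ ^ 2 + p₂ ^ 2) :
    ∃ P₁ P₂ : MvPolynomial (Fin n) ℚ, f ^ d = P₁ ^ 2 + P₂ ^ 2 := by
  classical
  have hQsq : ∀ x : ℚ, x ^ 2 ≠ -1 := fun x hx => by nlinarith [sq_nonneg x]
  haveI fK : Fact (Irreducible (auxq K)) := ⟨aux_irreducible_X_sq_add_one hsq⟩
  haveI fQ : Fact (Irreducible (auxq ℚ)) := ⟨aux_irreducible_X_sq_add_one hQsq⟩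
  haveI : CharZero (auxAR ℚ) :=
    charZero_of_injective_algebraMap (algebraMap ℚ (auxAR ℚ)).injective
  have hrM2 : auxr K ^ 2 = -1 := auxr_sq K
  have hrL2 : auxr ℚ ^ 2 = -1 := auxr_sq ℚ
  have hrL0 : auxr ℚ ≠ 0 := by
    intro h; rw [h] at hrL2; norm_num at hrL2
  letI algLM : Algebra (auxAR ℚ) (auxAR K) := (auxι K).toRingHom.toAlgebra
  have halgLM : algebraMap (auxAR ℚ) (auxAR K) = (auxι K).toRingHom := rfl
  -- ring hom versions
  set σR : auxAR K →+* auxAR K := (auxσ K).toRingHom with hσRdef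
  set γR : auxAR ℚ →+* auxAR ℚ := (auxσ ℚ).toRingHom with hγRdef
  have hσR : ∀ x, σR x = auxσ K x := fun _ => rfl
  have hγR : ∀ x, γR x = auxσ ℚ x := fun _ => rfl
  have hσroot : σR (auxr K) = -(auxr K) := auxσ_root K
  have hγroot : γR (auxr ℚ) = -(auxr ℚ) := auxσ_root ℚ
  have hγγ : ∀ x, γR (γR x) = x := fun x => auxσ_invol ℚ x
  have hcomm : ∀ x : auxAR ℚ,
      σR (algebraMap (auxAR ℚ) (auxAR K) x) = algebraMap (auxAR ℚ) (auxAR K) (γR x) :=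
    fun x => aux_comm K x
  -- finrank bookkeeping
  have hKne : (auxq K) ≠ 0 := fK.out.ne_zero
  have hQne : (auxq ℚ) ≠ 0 := fQ.out.ne_zero
  set pbM := AdjoinRoot.powerBasis hKne with hpbM
  haveI : Module.Finite K (auxAR K) := Module.Finite.of_basis pbM.basis
  have hndK : (auxq K).natDegree = 2 := by
    show (Polynomial.X ^ 2 + 1 : Polynomial K).natDegree = 2
    rw [show (1 : Polynomial K) = Polynomial.C 1 from (map_one _).symm,
      Polynomial.natDegree_X_pow_add_C]
  have hfKM : Module.finrank K (auxAR K) = 2 := by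
    rw [pbM.finrank, hpbM, AdjoinRoot.powerBasis_dim, hndK]
  haveI : FiniteDimensional ℚ (auxAR K) := Module.Finite.trans K (auxAR K)
  have hfQM : Module.finrank ℚ (auxAR K) = d * 2 := by
    rw [← Module.finrank_mul_finrank ℚ K (auxAR K), hd, hfKM]
  set pbL := AdjoinRoot.powerBasis hQne with hpbL
  haveI : Module.Finite ℚ (auxAR ℚ) := Module.Finite.of_basis pbL.basis
  have hndQ : (auxq ℚ).natDegree = 2 := by
    show (Polynomial.X ^ 2 + 1 : Polynomial ℚ).natDegree = 2
    rw [show (1 : Polynomial ℚ) = Polynomial.C 1 from (map_one _).symm,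
      Polynomial.natDegree_X_pow_add_C]
  have hfQL : Module.finrank ℚ (auxAR ℚ) = 2 := by
    rw [pbL.finrank, hpbL, AdjoinRoot.powerBasis_dim, hndQ]
  haveI hTower := IsScalarTower.of_algebraMap_eq'
    (Subsingleton.elim (algebraMap ℚ (auxAR K))
      ((algebraMap (auxAR ℚ) (auxAR K)).comp (algebraMap ℚ (auxAR ℚ))))
  haveI : FiniteDimensional (auxAR ℚ) (auxAR K) := FiniteDimensional.right ℚ _ _
  have hfLM : Module.finrank (auxAR ℚ) (auxAR K) = d := by
    have h := Module.finrank_mul_finrank ℚ (auxAR ℚ) (auxAR K)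
    rw [hfQL, hfQM] at h
    omega
  -- the basis of `auxAR K` over `auxAR ℚ` made of elements of `K`
  set bK : Module.Basis (Fin d) ℚ K := Module.finBasisOfFinrankEq ℚ K hd with hbK
  set v : Fin d → auxAR K := fun j => algebraMap K (auxAR K) (bK j) with hv
  have hrM_alg : algebraMap (auxAR ℚ) (auxAR K) (auxr ℚ) = auxr K := auxι_root K
  have hspan : ⊤ ≤ Submodule.span (auxAR ℚ) (Set.range v) := by
    intro m _
    have hm : m = ∑ k, pbM.basis.repr m k • pbM.gen ^ (k : ℕ) := by
      conv_lhs => rw [← pbM.basis.sum_repr m]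
      refine Finset.sum_congr rfl fun k _ => ?_
      rw [pbM.coe_basis]
    rw [hm]
    refine Submodule.sum_mem _ fun k _ => ?_
    set c := pbM.basis.repr m k with hc
    have hcmem : algebraMap K (auxAR K) c ∈ Submodule.span (auxAR ℚ) (Set.range v) := by
      have hcrepr : algebraMap K (auxAR K) c
          = ∑ j, algebraMap ℚ (auxAR ℚ) (bK.repr c j) • v j := by
        conv_lhs => rw [← bK.sum_repr c]
        rw [map_sum]
        refine Finset.sum_congr rfl fun j _ => ?_
        rw [hv, Algebra.smul_def, map_mul, ← IsScalarTower.algebraMap_apply,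
          IsScalarTower.algebraMap_apply ℚ (auxAR ℚ) (auxAR K), ← Algebra.smul_def]
      rw [hcrepr]
      exact Submodule.sum_mem _ fun j _ =>
        Submodule.smul_mem _ _ (Submodule.subset_span ⟨j, rfl⟩)
    have hrw : (c • pbM.gen ^ (k : ℕ)) = ((auxr ℚ) ^ (k : ℕ)) • (algebraMap K (auxAR K) c) := by
      rw [Algebra.smul_def, Algebra.smul_def, map_pow, hrM_alg,
        show pbM.gen = auxr K from rfl]
      ring
    rw [hrw]
    exact Submodule.smul_mem _ _ hcmem
  set bM : Module.Basis (Fin d) (auxAR ℚ) (auxAR K) :=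
    basisOfTopLeSpanOfCardEqFinrank v hspan (by simp [hfLM]) with hbM
  have hbMv : ∀ j, bM j = v j := fun j =>
    congrFun (coe_basisOfTopLeSpanOfCardEqFinrank v hspan (by simp [hfLM])) j
  have hfix : ∀ j, σR (bM j) = bM j := fun j => by
    rw [hbMv, hv, hσR]; exact (auxσ K).commutes _
  -- the polynomial rings
  letI : Algebra (MvPolynomial (Fin n) (auxAR ℚ)) (MvPolynomial (Fin n) (auxAR K)) :=
    (MvPolynomial.map (algebraMap (auxAR ℚ) (auxAR K))).toAlgebra
  have halg : ∀ p, algebraMap (MvPolynomial (Fin n) (auxAR ℚ)) (MvPolynomial (Fin n) (auxAR K)) p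
      = MvPolynomial.map (algebraMap (auxAR ℚ) (auxAR K)) p := fun _ => rfl
  set aKM := algebraMap K (auxAR K) with haKM
  set q : MvPolynomial (Fin n) (auxAR K) :=
    MvPolynomial.map aKM p₁ + MvPolynomial.C (auxr K) * MvPolynomial.map aKM p₂ with hqdef
  have hmapσ_aKM : (σR.comp aKM) = aKM := RingHom.ext fun x => by
    rw [RingHom.comp_apply, hσR]; exact (auxσ K).commutes x
  have hmapfix : ∀ p : MvPolynomial (Fin n) K,
      MvPolynomial.map σR (MvPolynomial.map aKM p) = MvPolynomial.map aKM p := by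
    intro p; rw [MvPolynomial.map_map, hmapσ_aKM]
  have hqbar : MvPolynomial.map σR q
      = MvPolynomial.map aKM p₁ - MvPolynomial.C (auxr K) * MvPolynomial.map aKM p₂ := by
    rw [hqdef, map_add, map_mul, MvPolynomial.map_C, hmapfix, hmapfix, hσroot, map_neg]
    ring
  have hCrM : (MvPolynomial.C (auxr K) : MvPolynomial (Fin n) (auxAR K)) ^ 2 = -1 := by
    rw [← map_pow, hrM2, map_neg, map_one]
  have hprod : q * MvPolynomial.map σR q
      = algebraMap (MvPolynomial (Fin n) (auxAR ℚ)) (MvPolynomial (Fin n) (auxAR K))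
          (MvPolynomial.map (algebraMap ℚ (auxAR ℚ)) f) := by
    rw [hqbar, hqdef]
    have hexpand : (MvPolynomial.map aKM p₁ + MvPolynomial.C (auxr K) * MvPolynomial.map aKM p₂)
        * (MvPolynomial.map aKM p₁ - MvPolynomial.C (auxr K) * MvPolynomial.map aKM p₂)
        = (MvPolynomial.map aKM p₁) ^ 2 + (MvPolynomial.map aKM p₂) ^ 2 := by
      have h := hCrM
      linear_combination (- (MvPolynomial.map aKM p₂) ^ 2) * h
    rw [hexpand, ← map_pow, ← map_pow, ← map_add, ← hf, halg,
      MvPolynomial.map_map, MvPolynomial.map_map]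
    exact congrArg (fun (g : ℚ →+* auxAR K) => MvPolynomial.map g f) (Subsingleton.elim _ _)
  -- take norms
  set NM := Algebra.norm (MvPolynomial (Fin n) (auxAR ℚ))
    (S := MvPolynomial (Fin n) (auxAR K)) with hNM
  have hNalg : NM (algebraMap (MvPolynomial (Fin n) (auxAR ℚ)) (MvPolynomial (Fin n) (auxAR K))
        (MvPolynomial.map (algebraMap ℚ (auxAR ℚ)) f))
      = (MvPolynomial.map (algebraMap ℚ (auxAR ℚ)) f) ^ d := by
    rw [hNM, Algebra.norm_algebraMap_of_basis (auxBasis bM halg)]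
    simp
  have hNσ : NM (MvPolynomial.map σR q) = MvPolynomial.map γR (NM q) :=
    aux_norm_map bM halg γR σR hcomm hfix q
  set g := NM q with hgdef
  set gp := MvPolynomial.map γR g with hgpdef
  have heq : (MvPolynomial.map (algebraMap ℚ (auxAR ℚ)) f) ^ d = g * gp := by
    rw [← hNalg, ← hprod, map_mul, hNσ, hgpdef, hgdef]
  -- decompose into rational polynomials
  set aQL := algebraMap ℚ (auxAR ℚ) with haQL
  have hγalg : ∀ a : ℚ, γR (aQL a) = aQL a := fun a => by
    rw [hγR]; exact (auxσ ℚ).commutes a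
  have h2L : (2 : auxAR ℚ) ≠ 0 := two_ne_zero
  set P1L := MvPolynomial.C (2⁻¹ : auxAR ℚ) * (g + gp) with hP1Ldef
  set P2L := MvPolynomial.C ((2 * auxr ℚ)⁻¹) * (g - gp) with hP2Ldef
  have h12 : (MvPolynomial.C (2⁻¹ : auxAR ℚ) : MvPolynomial (Fin n) (auxAR ℚ)) * 2 = 1 := by
    rw [show (2 : MvPolynomial (Fin n) (auxAR ℚ)) = MvPolynomial.C 2 from (map_ofNat _ 2).symm,
      ← map_mul, inv_mul_cancel₀ h2L, map_one]
  have hscal : auxr ℚ * (2 * auxr ℚ)⁻¹ = 2⁻¹ := by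
    rw [mul_inv_rev, ← mul_assoc, mul_inv_cancel₀ hrL0, one_mul]
  have hCscal : (MvPolynomial.C (auxr ℚ) : MvPolynomial (Fin n) (auxAR ℚ))
      * MvPolynomial.C ((2 * auxr ℚ)⁻¹) = MvPolynomial.C (2⁻¹ : auxAR ℚ) := by
    rw [← map_mul, hscal]
  have hsplit : g = P1L + MvPolynomial.C (auxr ℚ) * P2L := by
    rw [hP1Ldef, hP2Ldef, ← mul_assoc, hCscal]
    linear_combination (-g) * h12
  have hsplit2 : gp = P1L - MvPolynomial.C (auxr ℚ) * P2L := by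
    rw [hP1Ldef, hP2Ldef, ← mul_assoc, hCscal]
    linear_combination (-gp) * h12
  have hCrL2 : (MvPolynomial.C (auxr ℚ) : MvPolynomial (Fin n) (auxAR ℚ)) ^ 2 = -1 := by
    rw [← map_pow, hrL2, map_neg, map_one]
  have hgg : g * gp = P1L ^ 2 + P2L ^ 2 := by
    calc g * gp = (P1L + MvPolynomial.C (auxr ℚ) * P2L)
          * (P1L - MvPolynomial.C (auxr ℚ) * P2L) := by rw [← hsplit, ← hsplit2]
      _ = P1L ^ 2 + P2L ^ 2 := by linear_combination (- P2L ^ 2) * hCrL2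
  -- the coefficients of P1L and P2L are fixed by γR
  have hγγR : ∀ p : MvPolynomial (Fin n) (auxAR ℚ),
      MvPolynomial.map γR (MvPolynomial.map γR p) = p := by
    intro p
    rw [MvPolynomial.map_map, show (γR.comp γR) = RingHom.id _ from RingHom.ext hγγ,
      MvPolynomial.map_id]
  have hγ2 : γR (2⁻¹ : auxAR ℚ) = 2⁻¹ := by
    rw [map_inv₀, map_ofNat]
  have hγw : γR ((2 * auxr ℚ)⁻¹) = -((2 * auxr ℚ)⁻¹) := by
    rw [map_inv₀, map_mul, hγroot, map_ofNat, mul_neg, inv_neg]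
  have hfixP1 : MvPolynomial.map γR P1L = P1L := by
    rw [hP1Ldef, map_mul, MvPolynomial.map_C, map_add, ← hgpdef, hγγR, hγ2]
    ring
  have hfixP2 : MvPolynomial.map γR P2L = P2L := by
    rw [hP2Ldef, map_mul, MvPolynomial.map_C, map_sub, ← hgpdef, hγγR, hγw, map_neg, neg_mul]
    ring
  -- extract rational coefficients
  have hmem : ∀ (p : MvPolynomial (Fin n) (auxAR ℚ)), MvPolynomial.map γR p = p →
      ∀ m, ∃ a : ℚ, aQL a = p.coeff m := by
    intro p hp m
    have hfixc : γR (p.coeff m) = p.coeff m := by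
      have h := congrArg (MvPolynomial.coeff m) hp
      rwa [MvPolynomial.coeff_map] at h
    obtain ⟨a, b, hab⟩ := aux_decomp (p.coeff m)
    rw [show AdjoinRoot.root (Polynomial.X ^ 2 + 1 : Polynomial ℚ) = auxr ℚ from rfl] at hab
    change p.coeff m = aQL a + aQL b * auxr ℚ at hab
    have hγx : γR (p.coeff m) = aQL a - aQL b * auxr ℚ := by
      rw [hab, map_add, map_mul, hγroot, hγalg, hγalg]
      ring
    rw [hγx, hab] at hfixc
    have h2br : (2 : auxAR ℚ) * (aQL b * auxr ℚ) = 0 := by linear_combination -hfixc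
    have hb0 : b = 0 := by
      rcases mul_eq_zero.mp h2br with h' | h'
      · exact absurd h' h2L
      rcases mul_eq_zero.mp h' with h'' | h''
      · exact (map_eq_zero (algebraMap ℚ (auxAR ℚ))).mp h''
      · exact absurd h'' hrL0
    exact ⟨a, by rw [hab, hb0, map_zero, zero_mul, add_zero]⟩
  obtain ⟨P₁, hP₁⟩ := aux_exists_preimage aQL P1L (hmem P1L hfixP1)
  obtain ⟨P₂, hP₂⟩ := aux_exists_preimage aQL P2L (hmem P2L hfixP2)
  refine ⟨P₁, P₂, ?_⟩
  have hinj : Function.Injective (MvPolynomial.map (σ := Fin n) aQL) :=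
    MvPolynomial.map_injective _ (algebraMap ℚ (auxAR ℚ)).injective
  apply hinj
  rw [map_pow, map_add, map_pow, map_pow, hP₁, hP₂, heq, hgg]

theorem power_of_sum_two_squares_over_number_field_is_rational_sum_two_squares (n : ℕ)
    (K : IntermediateField ℚ ℝ) (hfin : FiniteDimensional ℚ K)
    (d : ℕ) (hd : Module.finrank ℚ K = d)
    (f : MvPolynomial (Fin n) ℚ)
    (p₁ p₂ : MvPolynomial (Fin n) K)
    (hf : MvPolynomial.map (algebraMap ℚ K) f = p₁ ^ 2 + p₂ ^ 2) :
    ∃ P₁ P₂ : MvPolynomial (Fin n) ℚ, f ^ d = P₁ ^ 2 + P₂ ^ 2 := by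
  haveI := hfin
  refine aux_main ?_ n d hd f p₁ p₂ hf
  intro x hx
  have h := congrArg (algebraMap K ℝ) hx
  rw [map_pow, map_neg, map_one] at h
  nlinarith [sq_nonneg (algebraMap K ℝ x)]
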